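/- Let D=(N,A,s,t) be an acyclic network and let a, b be arcs of the reduction Ã such that the inequalities x(a)≥0 and x(b)≥0 define facets F_a and F_b of the flow polytope F(D). Then F_a = F_b if and only if a and b belong to the same corridor of D. -/

import Mathlib

open scoped Classical

variable {V : Type*} [Fintype V] [DecidableEq V]

/-- A directed graph (arc set `A`) is acyclic: no directed cycle. -/
def Acyclic (A : Finset (V × V)) : Prop :=
  ∀ v : V, ¬ Relation.TransGen (fun u w => (u, w) ∈ A) v v

/-- Sum of `x` over the arcs of `A` with tail `v`. -/
noncomputable def outSum (A : Finset (V × V)) (x : V × V → ℝ) (v : V) : ℝ :=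
  ∑ a ∈ A.filter (fun a => a.1 = v), x a

/-- Sum of `x` over the arcs of `A` with head `v`. -/
noncomputable def inSum (A : Finset (V × V)) (x : V × V → ℝ) (v : V) : ℝ :=
  ∑ a ∈ A.filter (fun a => a.2 = v), x a

/-- A flow of value 1 in the network `(V, A, s, t)`. -/
def IsFlow (A : Finset (V × V)) (s t : V) (x : V × V → ℝ) : Prop :=
  (∀ a, a ∉ A → x a = 0) ∧ (∀ a, 0 ≤ x a) ∧
    (∀ v, v ≠ s → v ≠ t → outSum A x v = inSum A x v) ∧
    outSum A x s - inSum A x s = 1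

/-- The flow polytope: all value-1 flows, as a subset of `ℝ^(V × V)`. -/
def flowPolytope (A : Finset (V × V)) (s t : V) : Set ((V × V) → ℝ) :=
  {x | IsFlow A s t x}

/-- An `s`–`t` path, given by its list of nodes. -/
def IsPath (A : Finset (V × V)) (s t : V) (p : List V) : Prop :=
  p.Chain' (fun u v => (u, v) ∈ A) ∧ p.head? = some s ∧ p.getLast? = some t ∧ p.Nodup

/-- The arcs of a path given by its node list. -/
def pathEdges (p : List V) : List (V × V) := p.zip p.tail

/-- Characteristic vector of (the arc set of) a path. -/
def chi (p : List V) : (V × V) → ℝ := fun a => if a ∈ pathEdges p then 1 else 0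

/-- Arcs lying on at least one `s`–`t` path (the arc set of the reduced network). -/
noncomputable def redArcs (A : Finset (V × V)) (s t : V) : Finset (V × V) :=
  A.filter fun a => ∃ p : List V, IsPath A s t p ∧ a ∈ pathEdges p

/-- Nodes incident to an arc of the reduced network. -/
noncomputable def redNodes (A : Finset (V × V)) (s t : V) : Finset V :=
  (redArcs A s t).image Prod.fst ∪ (redArcs A s t).image Prod.snd

/-- Out-degree in the reduced network. -/
noncomputable def dplus (A : Finset (V × V)) (s t : V) (u : V) : ℕ :=
  ((redArcs A s t).filter fun a => a.1 = u).card

/-- In-degree in the reduced network. -/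
noncomputable def dminus (A : Finset (V × V)) (s t : V) (u : V) : ℕ :=
  ((redArcs A s t).filter fun a => a.2 = u).card

/-- A corridor: a maximal path of the reduced network all of whose internal nodes
have in- and out-degree 1 in the reduced network. -/
def IsCorridor (A : Finset (V × V)) (s t : V) (c : List V) : Prop :=
  2 ≤ c.length ∧ c.Chain' (fun u v => (u, v) ∈ redArcs A s t) ∧
    (∀ v ∈ c.tail.dropLast, dminus A s t v = 1 ∧ dplus A s t v = 1) ∧
    (∀ h, c.head? = some h → dminus A s t h ≠ 1 ∨ dplus A s t h ≠ 1) ∧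
    (∀ z, c.getLast? = some z → dminus A s t z ≠ 1 ∨ dplus A s t z ≠ 1)

/-- A good corridor. -/
def IsGoodCorridor (A : Finset (V × V)) (s t : V) (c : List V) : Prop :=
  IsCorridor A s t c ∧ (∀ h, c.head? = some h → 2 ≤ dplus A s t h) ∧
    (∀ z, c.getLast? = some z → 2 ≤ dminus A s t z)

/-- A good arc: an arc belonging to some good corridor. -/
def IsGoodArc (A : Finset (V × V)) (s t : V) (a : V × V) : Prop :=
  ∃ c, IsGoodCorridor A s t c ∧ a ∈ pathEdges c

/-- Two vertices of a polytope `S` are adjacent when the segment joining them is a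
(one-dimensional) face of `S`, i.e. an exposed face. -/
def AdjacentVerts (S : Set ((V × V) → ℝ)) (x y : (V × V) → ℝ) : Prop :=
  x ≠ y ∧ IsExposed ℝ S (segment ℝ x y)

/-- A facet: a proper maximal (exposed) face. -/
def IsFacetOf (S F : Set ((V × V) → ℝ)) : Prop :=
  IsExposed ℝ S F ∧ F ≠ S ∧ ∀ G, IsExposed ℝ S G → G ≠ S → F ⊆ G → G = F

set_option linter.unusedSectionVars false
open Relation List

lemma pathEdges_nil' : pathEdges ([] : List V) = [] := rfl
lemma pathEdges_single (v : V) : pathEdges [v] = [] := rfl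
@[simp] lemma pathEdges_cons_cons (u v : V) (l : List V) :
    pathEdges (u :: v :: l) = (u, v) :: pathEdges (v :: l) := rfl

lemma pathEdges_append (xs : List V) (v : V) (ys : List V) :
    pathEdges (xs ++ v :: ys) = pathEdges (xs ++ [v]) ++ pathEdges (v :: ys) := by
  induction xs with
  | nil => simp [pathEdges_single]
  | cons x xs ih =>
    cases xs with
    | nil => simp [pathEdges, List.zip]
    | cons y zs => simpa using ih

lemma mem_pathEdges_iff {e : V × V} {p : List V} :
    e ∈ pathEdges p ↔ ∃ xs ys, p = xs ++ e.1 :: e.2 :: ys := by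
  induction p with
  | nil =>
    constructor
    · intro h; exact absurd h (by simp [pathEdges])
    · rintro ⟨xs, ys, h⟩; exact absurd h.symm (by simp)
  | cons x l ih =>
    cases l with
    | nil =>
      constructor
      · intro h; exact absurd h (by simp [pathEdges])
      · rintro ⟨xs, ys, h⟩
        apply_fun List.length at h; simp at h; omega
    | cons y r =>
      rw [pathEdges_cons_cons, List.mem_cons, ih]
      constructor
      · rintro (rfl | ⟨xs, ys, h⟩)
        · exact ⟨[], r, rfl⟩
        · exact ⟨x :: xs, ys, by simp [h]⟩
      · rintro ⟨xs, ys, h⟩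
        cases xs with
        | nil =>
          simp only [List.nil_append, List.cons.injEq] at h
          left; obtain ⟨h1, h2, _⟩ := h
          exact Prod.ext h1.symm h2.symm
        | cons x' xs' =>
          simp only [List.cons_append, List.cons.injEq] at h
          right; exact ⟨xs', ys, h.2⟩

lemma mem_of_mem_pathEdges {e : V × V} {p : List V} (h : e ∈ pathEdges p) :
    e.1 ∈ p ∧ e.2 ∈ p := by
  obtain ⟨xs, ys, rfl⟩ := mem_pathEdges_iff.1 h
  constructor <;> simp

lemma chain'_reflTransGen_head {R : V → V → Prop} {l : List V} (hc : l.Chain' R)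
    {v u : V} (hv : l.head? = some v) (hu : u ∈ l) : Relation.ReflTransGen R v u := by
  induction l generalizing v with
  | nil => simp at hu
  | cons x l ih =>
    simp only [List.head?_cons, Option.some.injEq] at hv
    subst hv
    rcases List.mem_cons.1 hu with rfl | hu'
    · exact .refl
    · cases l with
      | nil => simp at hu'
      | cons y l' =>
        rw [List.Chain', List.isChain_cons_cons] at hc
        exact Relation.ReflTransGen.head hc.1 (ih hc.2 rfl hu')

lemma chain'_reflTransGen_last {R : V → V → Prop} {l : List V} (hc : l.Chain' R)
    {u w : V} (hu : u ∈ l) (hw : l.getLast? = some w) : Relation.ReflTransGen R u w := by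
  induction l generalizing u with
  | nil => simp at hu
  | cons x l ih =>
    cases l with
    | nil =>
      simp only [List.mem_singleton] at hu
      simp only [List.getLast?_singleton, Option.some.injEq] at hw
      subst hu; subst hw; exact .refl
    | cons y l' =>
      rw [List.getLast?_cons_cons] at hw
      rw [List.Chain', List.isChain_cons_cons] at hc
      rcases List.mem_cons.1 hu with rfl | hu'
      · exact Relation.ReflTransGen.head hc.1 (ih hc.2 (List.mem_cons_self) hw)
      · exact ih hc.2 hu' hw

lemma chain'_transGen {R : V → V → Prop} :
    ∀ (xs : List V) (v : V) (ys : List V) (u : V),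
      List.Chain' R (xs ++ v :: ys) → u ∈ xs → Relation.TransGen R u v := by
  intro xs
  induction xs with
  | nil => intro v ys u _ hu; simp at hu
  | cons x xs ih =>
    intro v ys u hc hu
    rcases List.mem_cons.1 hu with rfl | hu'
    · cases xs with
      | nil =>
        rw [List.cons_append, List.nil_append, List.Chain', List.isChain_cons_cons] at hc
        exact Relation.TransGen.single hc.1
      | cons y xs' =>
        rw [List.cons_append, List.cons_append, List.Chain', List.isChain_cons_cons] at hc
        exact Relation.TransGen.head hc.1 (ih v ys y (by simpa [List.Chain'] using hc.2) (List.mem_cons_self))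
    · exact ih v ys u (by simpa [List.Chain'] using (List.isChain_cons.1 (by simpa [List.Chain'] using hc)).2) hu'

lemma Acyclic.nodup_chain' {A : Finset (V × V)} (hA : Acyclic A) {l : List V}
    (hc : l.Chain' (fun u w => (u, w) ∈ A)) : l.Nodup := by
  induction l with
  | nil => simp
  | cons x l ih =>
    refine List.nodup_cons.2 ⟨?_, ih hc.tail⟩
    intro hx
    cases l with
    | nil => simp at hx
    | cons y l' =>
      rw [List.Chain', List.isChain_cons_cons] at hc
      exact hA x (Relation.TransGen.head' hc.1 (chain'_reflTransGen_head hc.2 rfl hx))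

lemma Acyclic.no_self_loop {A : Finset (V × V)} (hA : Acyclic A) {v : V} (h : (v, v) ∈ A) :
    False := hA v (Relation.TransGen.single h)

lemma mem_pathEdges_tail {e : V × V} {p : List V} (h : e ∈ pathEdges p) :
    e.1 ∈ p ∧ e.2 ∈ p.tail := List.of_mem_zip h

lemma chain'_iff_pathEdges {R : V → V → Prop} {l : List V} :
    l.Chain' R ↔ ∀ e ∈ pathEdges l, R e.1 e.2 := by
  induction l with
  | nil => simp [pathEdges, List.Chain']
  | cons x l ih =>
    cases l with
    | nil => simp [pathEdges, List.Chain']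
    | cons y r =>
      rw [List.Chain', List.isChain_cons_cons, pathEdges_cons_cons, show IsChain R (y :: r) ↔ _ from ih]
      constructor
      · rintro ⟨h1, h2⟩ e he
        rcases List.mem_cons.1 he with rfl | he'
        · exact h1
        · exact h2 e he'
      · intro h
        exact ⟨h _ (List.mem_cons_self), fun e he => h e (List.mem_cons_of_mem _ he)⟩

lemma mem_of_getLast?' {l : List V} {w : V} (h : l.getLast? = some w) : w ∈ l := by
  obtain ⟨h1, rfl⟩ := List.mem_getLast?_eq_getLast (show w ∈ l.getLast? from h)
  exact List.getLast_mem h1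

lemma red_subset {A : Finset (V × V)} {s t : V} : redArcs A s t ⊆ A :=
  Finset.filter_subset _ _

lemma mem_A_of_pathEdges {A : Finset (V × V)} {p : List V}
    (hc : p.Chain' fun u v => (u, v) ∈ A) {e : V × V} (he : e ∈ pathEdges p) : e ∈ A :=
  chain'_iff_pathEdges.1 hc e he

lemma mem_red_of_path {A : Finset (V × V)} {s t : V} {p : List V} (hp : IsPath A s t p)
    {e : V × V} (he : e ∈ pathEdges p) : e ∈ redArcs A s t :=
  Finset.mem_filter.2 ⟨mem_A_of_pathEdges hp.1 he, p, hp, he⟩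

lemma chain'_red_of_path {A : Finset (V × V)} {s t : V} {p : List V} (hp : IsPath A s t p) :
    p.Chain' (fun u v => (u, v) ∈ redArcs A s t) :=
  chain'_iff_pathEdges.2 fun e he => mem_red_of_path hp he

lemma s_ne_t_of_red {A : Finset (V × V)} {s t : V} {a : V × V} (ha : a ∈ redArcs A s t) :
    s ≠ t := by
  intro hst
  obtain ⟨-, p, hp, he⟩ := Finset.mem_filter.1 ha
  obtain ⟨hc, hh, hl, hnd⟩ := hp
  cases p with
  | nil => simp at hh
  | cons x l =>
    simp only [List.head?_cons, Option.some.injEq] at hh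
    subst hh
    cases l with
    | nil => simp [pathEdges, List.zip] at he
    | cons y r =>
      rw [List.getLast?_cons_cons] at hl
      have : t ∈ y :: r := mem_of_getLast?' hl
      rw [← hst] at this
      exact (List.nodup_cons.1 hnd).1 this

lemma red_head_ne_s {A : Finset (V × V)} {s t : V} {e : V × V} (he : e ∈ redArcs A s t) :
    e.2 ≠ s := by
  intro h2
  obtain ⟨-, p, hp, hep⟩ := Finset.mem_filter.1 he
  obtain ⟨hc, hh, hl, hnd⟩ := hp
  obtain ⟨xs, ys, rfl⟩ := mem_pathEdges_iff.1 hep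
  rw [h2] at hnd hh
  cases xs with
  | nil =>
    simp only [List.nil_append, List.head?_cons, Option.some.injEq] at hh
    subst hh
    simp at hnd
  | cons x xs' =>
    simp only [List.cons_append, List.head?_cons, Option.some.injEq] at hh
    subst hh
    rw [List.cons_append] at hnd
    exact (List.nodup_cons.1 hnd).1 (by simp)

lemma red_tail_ne_t {A : Finset (V × V)} {s t : V} {e : V × V} (he : e ∈ redArcs A s t) :
    e.1 ≠ t := by
  intro h1
  obtain ⟨-, p, hp, hep⟩ := Finset.mem_filter.1 he
  obtain ⟨hc, hh, hl, hnd⟩ := hp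
  obtain ⟨xs, ys, rfl⟩ := mem_pathEdges_iff.1 hep
  rw [h1] at hnd hl
  have h1l : (xs ++ t :: e.2 :: ys).getLast? = (t :: e.2 :: ys).getLast? :=
    List.getLast?_append_of_ne_nil _ (by simp)
  rw [h1l, List.getLast?_cons_cons] at hl
  have htmem : t ∈ e.2 :: ys := mem_of_getLast?' hl
  have : (t :: e.2 :: ys).Nodup := (hnd.sublist (List.sublist_append_right _ _))
  exact (List.nodup_cons.1 this).1 htmem

lemma pathEdges_tail_unique {p : List V} (hnd : p.Nodup) {e e' : V × V}
    (he : e ∈ pathEdges p) (he' : e' ∈ pathEdges p) (h : e.1 = e'.1) : e = e' := by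
  induction p with
  | nil => simp [pathEdges] at he
  | cons x l ih =>
    cases l with
    | nil => simp [pathEdges, List.zip] at he
    | cons y r =>
      rw [pathEdges_cons_cons] at he he'
      have hx : x ∉ y :: r := (List.nodup_cons.1 hnd).1
      rcases List.mem_cons.1 he with rfl | he1 <;> rcases List.mem_cons.1 he' with rfl | he2
      · rfl
      · exact absurd ((mem_pathEdges_tail he2).1) (by rw [← h]; exact hx)
      · exact absurd ((mem_pathEdges_tail he1).1) (by rw [h]; exact hx)
      · exact ih (List.nodup_cons.1 hnd).2 he1 he2

lemma pathEdges_head_unique {p : List V} (hnd : p.Nodup) {e e' : V × V}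
    (he : e ∈ pathEdges p) (he' : e' ∈ pathEdges p) (h : e.2 = e'.2) : e = e' := by
  induction p with
  | nil => simp [pathEdges] at he
  | cons x l ih =>
    cases l with
    | nil => simp [pathEdges, List.zip] at he
    | cons y r =>
      rw [pathEdges_cons_cons] at he he'
      have hy : (y :: r).Nodup := (List.nodup_cons.1 hnd).2
      rcases List.mem_cons.1 he with rfl | he1 <;> rcases List.mem_cons.1 he' with rfl | he2
      · rfl
      · exact absurd (show e'.2 ∈ r from (mem_pathEdges_tail he2).2)
          (by rw [← h]; exact (List.nodup_cons.1 hy).1)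
      · exact absurd (show e.2 ∈ r from (mem_pathEdges_tail he1).2)
          (by rw [h]; exact (List.nodup_cons.1 hy).1)
      · exact ih hy he1 he2

lemma red_in_unique {A : Finset (V × V)} {s t : V} {v : V} (h1 : dminus A s t v = 1)
    {f e : V × V} (hf : f ∈ redArcs A s t) (hf2 : f.2 = v)
    (he : e ∈ redArcs A s t) (he2 : e.2 = v) : e = f := by
  rw [dminus, Finset.card_eq_one] at h1
  obtain ⟨g, hg⟩ := h1
  have h1' : f ∈ ({g} : Finset (V × V)) := hg ▸ Finset.mem_filter.2 ⟨hf, hf2⟩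
  have h2' : e ∈ ({g} : Finset (V × V)) := hg ▸ Finset.mem_filter.2 ⟨he, he2⟩
  rw [Finset.mem_singleton] at h1' h2'
  rw [h1', h2']

lemma red_out_unique {A : Finset (V × V)} {s t : V} {v : V} (h1 : dplus A s t v = 1)
    {f e : V × V} (hf : f ∈ redArcs A s t) (hf2 : f.1 = v)
    (he : e ∈ redArcs A s t) (he2 : e.1 = v) : e = f := by
  rw [dplus, Finset.card_eq_one] at h1
  obtain ⟨g, hg⟩ := h1
  have h1' : f ∈ ({g} : Finset (V × V)) := hg ▸ Finset.mem_filter.2 ⟨hf, hf2⟩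
  have h2' : e ∈ ({g} : Finset (V × V)) := hg ▸ Finset.mem_filter.2 ⟨he, he2⟩
  rw [Finset.mem_singleton] at h1' h2'
  rw [h1', h2']

lemma dplus_out_exists {A : Finset (V × V)} {s t : V} {v : V} (h1 : dplus A s t v = 1) :
    ∃ e ∈ redArcs A s t, e.1 = v := by
  rw [dplus, Finset.card_eq_one] at h1
  obtain ⟨g, hg⟩ := h1
  have : g ∈ (redArcs A s t).filter fun a => a.1 = v := hg ▸ Finset.mem_singleton_self g
  rw [Finset.mem_filter] at this
  exact ⟨g, this.1, this.2⟩

lemma dminus_in_exists {A : Finset (V × V)} {s t : V} {v : V} (h1 : dminus A s t v = 1) :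
    ∃ e ∈ redArcs A s t, e.2 = v := by
  rw [dminus, Finset.card_eq_one] at h1
  obtain ⟨g, hg⟩ := h1
  have : g ∈ (redArcs A s t).filter fun a => a.2 = v := hg ▸ Finset.mem_singleton_self g
  rw [Finset.mem_filter] at this
  exact ⟨g, this.1, this.2⟩

noncomputable def mOut (A : Finset (V × V)) (v : V) : ℕ :=
  (Finset.univ.filter fun u => Relation.TransGen (fun p q => (p, q) ∈ A) v u).card

noncomputable def mIn (A : Finset (V × V)) (v : V) : ℕ :=
  (Finset.univ.filter fun u => Relation.TransGen (fun p q => (p, q) ∈ A) u v).card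

lemma mOut_lt {A : Finset (V × V)} (hA : Acyclic A) {v w : V} (h : (v, w) ∈ A) :
    mOut A w < mOut A v := by
  apply Finset.card_lt_card
  constructor
  · intro u hu
    rw [Finset.mem_filter] at hu ⊢
    exact ⟨Finset.mem_univ _, hu.2.head h⟩
  · intro hsub
    have hw : w ∈ Finset.univ.filter fun u => Relation.TransGen (fun p q => (p, q) ∈ A) v u :=
      Finset.mem_filter.2 ⟨Finset.mem_univ _, Relation.TransGen.single h⟩
    have := Finset.mem_filter.1 (hsub hw)
    exact hA w this.2

lemma mIn_lt {A : Finset (V × V)} (hA : Acyclic A) {v w : V} (h : (v, w) ∈ A) :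
    mIn A v < mIn A w := by
  apply Finset.card_lt_card
  constructor
  · intro u hu
    rw [Finset.mem_filter] at hu ⊢
    exact ⟨Finset.mem_univ _, hu.2.tail h⟩
  · intro hsub
    have hv : v ∈ Finset.univ.filter fun u => Relation.TransGen (fun p q => (p, q) ∈ A) u w :=
      Finset.mem_filter.2 ⟨Finset.mem_univ _, Relation.TransGen.single h⟩
    have := Finset.mem_filter.1 (hsub hv)
    exact hA v this.2

lemma head?_append_eq {l : List V} {u : V} {r r' : List V} :
    (l ++ u :: r).head? = (l ++ u :: r').head? := by cases l <;> simp

lemma chain'_append_singleton_cons {R : V → V → Prop} {l₁ : List V} {u v : V} {l₂ : List V}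
    (h1 : List.Chain' R (l₁ ++ [u])) (h2 : List.Chain' R (v :: l₂)) (h : R u v) :
    List.Chain' R ((l₁ ++ [u]) ++ (v :: l₂)) := by
  rw [List.Chain', List.isChain_append]
  refine ⟨h1, h2, ?_⟩
  intro p hp q hq
  rw [List.getLast?_append_of_ne_nil _ (by simp)] at hp
  simp only [List.getLast?_singleton, Option.mem_def, Option.some.injEq] at hp
  simp only [List.head?_cons, Option.mem_def, Option.some.injEq] at hq
  subst hp; subst hq; exact h

lemma exists_pos_of_sum_pos {S : Finset (V × V)} {x : (V × V) → ℝ}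
    (hnn : ∀ e, 0 ≤ x e) (h : 0 < ∑ e ∈ S, x e) : ∃ e ∈ S, 0 < x e := by
  by_contra hc
  push_neg at hc
  have : ∑ e ∈ S, x e = 0 := Finset.sum_eq_zero fun e he => le_antisymm (hc e he) (hnn e)
  rw [this] at h; exact lt_irrefl _ h

lemma sum_out_eq_sum_in {A : Finset (V × V)} (x : (V × V) → ℝ) :
    ∑ v : V, outSum A x v = ∑ v : V, inSum A x v := by
  unfold outSum inSum
  rw [Finset.sum_fiberwise_of_maps_to (fun e _ => Finset.mem_univ e.1) x,
    Finset.sum_fiberwise_of_maps_to (fun e _ => Finset.mem_univ e.2) x]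

lemma t_balance {A : Finset (V × V)} {s t : V} (hst : s ≠ t) {x : (V × V) → ℝ}
    (hx : IsFlow A s t x) : inSum A x t - outSum A x t = 1 := by
  have hsum : ∑ v : V, (outSum A x v - inSum A x v) = 0 := by
    rw [Finset.sum_sub_distrib, sum_out_eq_sum_in, sub_self]
  have hsplit :
      ∑ v ∈ (Finset.univ \ {s, t} : Finset V), (outSum A x v - inSum A x v) +
        ∑ v ∈ ({s, t} : Finset V), (outSum A x v - inSum A x v) =
        ∑ v : V, (outSum A x v - inSum A x v) :=
    Finset.sum_sdiff (Finset.subset_univ _)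
  have hrest : ∑ v ∈ (Finset.univ \ {s, t} : Finset V), (outSum A x v - inSum A x v) = 0 := by
    apply Finset.sum_eq_zero
    intro v hv
    rw [Finset.mem_sdiff, Finset.mem_insert, Finset.mem_singleton] at hv
    push_neg at hv
    rw [hx.2.2.1 v hv.2.1 hv.2.2, sub_self]
  have hpair : ∑ v ∈ ({s, t} : Finset V), (outSum A x v - inSum A x v) =
      (outSum A x s - inSum A x s) + (outSum A x t - inSum A x t) :=
    Finset.sum_pair hst
  have hval := hx.2.2.2
  rw [hrest, hpair, hval] at hsplit
  rw [hsum] at hsplit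
  linarith

lemma walk_to_t {A : Finset (V × V)} {s t : V} (hA : Acyclic A) {x : (V × V) → ℝ}
    (hx : IsFlow A s t x) :
    ∀ n v, mOut A v ≤ n → 0 < outSum A x v →
      ∃ l, List.Chain' (fun u w => (u, w) ∈ A) (v :: l) ∧ (v :: l).getLast? = some t := by
  intro n
  induction n with
  | zero =>
    intro v hn hpos
    exfalso
    obtain ⟨e, heS, -⟩ := exists_pos_of_sum_pos hx.2.1 hpos
    obtain ⟨heA, he1⟩ := Finset.mem_filter.1 heS
    have hvw : (v, e.2) ∈ A := by rw [← he1]; simpa using heA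
    have := mOut_lt hA hvw
    omega
  | succ n ih =>
    intro v hn hpos
    obtain ⟨e, heS, hepos⟩ := exists_pos_of_sum_pos hx.2.1 hpos
    obtain ⟨heA, he1⟩ := Finset.mem_filter.1 heS
    have hvw : (v, e.2) ∈ A := by rw [← he1]; simpa using heA
    by_cases hwt : e.2 = t
    · exact ⟨[t], List.isChain_cons_cons.2 ⟨hwt ▸ hvw, List.isChain_singleton t⟩, by simp⟩
    · have hws : 0 < outSum A x e.2 := by
        rcases eq_or_ne e.2 s with hes | hwns
        · have h1 := hx.2.2.2
          have h2 : 0 ≤ inSum A x s := Finset.sum_nonneg fun i _ => hx.2.1 i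
          rw [hes]; linarith
        · rw [hx.2.2.1 e.2 hwns hwt]
          have : x e ≤ inSum A x e.2 :=
            Finset.single_le_sum (fun i _ => hx.2.1 i)
              (Finset.mem_filter.2 ⟨heA, rfl⟩)
          linarith
      obtain ⟨l, hl, hlast⟩ := ih e.2 (by have := mOut_lt hA hvw; omega) hws
      exact ⟨e.2 :: l, List.isChain_cons_cons.2 ⟨hvw, hl⟩, by rw [List.getLast?_cons_cons]; exact hlast⟩

lemma walk_from_s {A : Finset (V × V)} {s t : V} (hA : Acyclic A) (hst : s ≠ t)
    {x : (V × V) → ℝ} (hx : IsFlow A s t x) :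
    ∀ n v, mIn A v ≤ n → 0 < inSum A x v →
      ∃ l, List.Chain' (fun u w => (u, w) ∈ A) (l ++ [v]) ∧ (l ++ [v]).head? = some s := by
  intro n
  induction n with
  | zero =>
    intro v hn hpos
    exfalso
    obtain ⟨e, heS, -⟩ := exists_pos_of_sum_pos hx.2.1 hpos
    obtain ⟨heA, he2⟩ := Finset.mem_filter.1 heS
    have huv : (e.1, v) ∈ A := by rw [← he2]; simpa using heA
    have := mIn_lt hA huv
    omega
  | succ n ih =>
    intro v hn hpos
    obtain ⟨e, heS, hepos⟩ := exists_pos_of_sum_pos hx.2.1 hpos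
    obtain ⟨heA, he2⟩ := Finset.mem_filter.1 heS
    have huv : (e.1, v) ∈ A := by rw [← he2]; simpa using heA
    by_cases hus : e.1 = s
    · exact ⟨[s], List.isChain_pair.2 (hus ▸ huv), by simp⟩
    · have hus' : 0 < inSum A x e.1 := by
        rcases eq_or_ne e.1 t with het | hunt
        · have h1 := t_balance hst hx
          have h2 : 0 ≤ outSum A x t := Finset.sum_nonneg fun i _ => hx.2.1 i
          rw [het]; linarith
        · rw [← hx.2.2.1 e.1 hus hunt]
          have : x e ≤ outSum A x e.1 :=
            Finset.single_le_sum (fun i _ => hx.2.1 i)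
              (Finset.mem_filter.2 ⟨heA, rfl⟩)
          linarith
      obtain ⟨l, hl, hhead⟩ := ih e.1 (by have := mIn_lt hA huv; omega) hus'
      refine ⟨l ++ [e.1], ?_, ?_⟩
      · exact chain'_append_singleton_cons hl (List.isChain_singleton v) huv
      · rw [show (l ++ [e.1]) ++ [v] = l ++ e.1 :: [v] by simp]
        rw [head?_append_eq (r' := [])]
        exact hhead

lemma mem_red_of_flow_pos {A : Finset (V × V)} {s t : V} (hA : Acyclic A) (hst : s ≠ t)
    {x : (V × V) → ℝ} (hx : IsFlow A s t x) {e : V × V} (he : 0 < x e) :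
    e ∈ redArcs A s t := by
  have heA : e ∈ A := by
    by_contra hc
    rw [hx.1 e hc] at he; exact lt_irrefl _ he
  have hfwd : ∃ l, List.Chain' (fun u w => (u, w) ∈ A) (e.2 :: l) ∧
      (e.2 :: l).getLast? = some t := by
    by_cases hvt : e.2 = t
    · exact ⟨[], List.isChain_singleton _, by simp [hvt]⟩
    · apply walk_to_t hA hx (mOut A e.2) e.2 le_rfl
      rcases eq_or_ne e.2 s with hes | hvs
      · have h1 := hx.2.2.2
        have h2 : 0 ≤ inSum A x s := Finset.sum_nonneg fun i _ => hx.2.1 i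
        rw [hes]; linarith
      · rw [hx.2.2.1 e.2 hvs hvt]
        have : x e ≤ inSum A x e.2 :=
          Finset.single_le_sum (fun i _ => hx.2.1 i) (Finset.mem_filter.2 ⟨heA, rfl⟩)
        linarith
  have hbwd : ∃ l, List.Chain' (fun u w => (u, w) ∈ A) (l ++ [e.1]) ∧
      (l ++ [e.1]).head? = some s := by
    by_cases hus : e.1 = s
    · exact ⟨[], List.isChain_singleton _, by simp [hus]⟩
    · apply walk_from_s hA hst hx (mIn A e.1) e.1 le_rfl
      rcases eq_or_ne e.1 t with het | hunt
      · have h1 := t_balance hst hx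
        have h2 : 0 ≤ outSum A x t := Finset.sum_nonneg fun i _ => hx.2.1 i
        rw [het]; linarith
      · rw [← hx.2.2.1 e.1 hus hunt]
        have : x e ≤ outSum A x e.1 :=
          Finset.single_le_sum (fun i _ => hx.2.1 i) (Finset.mem_filter.2 ⟨heA, rfl⟩)
        linarith
  obtain ⟨lf, hcf, hlf⟩ := hfwd
  obtain ⟨lb, hcb, hhb⟩ := hbwd
  refine Finset.mem_filter.2 ⟨heA, lb ++ e.1 :: e.2 :: lf, ⟨?_, ?_, ?_, ?_⟩, ?_⟩
  · have : lb ++ e.1 :: e.2 :: lf = (lb ++ [e.1]) ++ (e.2 :: lf) := by simp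
    rw [this]
    exact chain'_append_singleton_cons hcb hcf (by simpa using heA)
  · rw [show lb ++ e.1 :: e.2 :: lf = lb ++ e.1 :: (e.2 :: lf) from rfl]
    rw [head?_append_eq (r' := [])]; exact hhb
  · rw [List.getLast?_append_of_ne_nil _ (by simp), List.getLast?_cons_cons]
    exact hlf
  · exact hA.nodup_chain' (by
      have : lb ++ e.1 :: e.2 :: lf = (lb ++ [e.1]) ++ (e.2 :: lf) := by simp
      rw [this]
      exact chain'_append_singleton_cons hcb hcf (by simpa using heA))
  · exact mem_pathEdges_iff.2 ⟨lb, lf, rfl⟩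

lemma path_edge_tail_ne_t {A : Finset (V × V)} {s t : V} {p : List V} (hp : IsPath A s t p)
    {e : V × V} (he : e ∈ pathEdges p) : e.1 ≠ t := by
  intro h1
  obtain ⟨hc, hh, hl, hnd⟩ := hp
  obtain ⟨xs, ys, rfl⟩ := mem_pathEdges_iff.1 he
  rw [h1] at hnd hl
  rw [List.getLast?_append_of_ne_nil _ (by simp), List.getLast?_cons_cons] at hl
  have htmem : t ∈ e.2 :: ys := mem_of_getLast?' hl
  have : (t :: e.2 :: ys).Nodup := hnd.sublist (List.sublist_append_right _ _)
  exact (List.nodup_cons.1 this).1 htmem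

lemma path_edge_head_ne_s {A : Finset (V × V)} {s t : V} {p : List V} (hp : IsPath A s t p)
    {e : V × V} (he : e ∈ pathEdges p) : e.2 ≠ s := by
  intro h2
  obtain ⟨hc, hh, hl, hnd⟩ := hp
  obtain ⟨xs, ys, rfl⟩ := mem_pathEdges_iff.1 he
  rw [h2] at hnd hh
  cases xs with
  | nil =>
    simp only [List.nil_append, List.head?_cons, Option.some.injEq] at hh
    subst hh
    simp at hnd
  | cons x xs' =>
    simp only [List.cons_append, List.head?_cons, Option.some.injEq] at hh
    subst hh
    rw [List.cons_append] at hnd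
    exact (List.nodup_cons.1 hnd).1 (by simp)

lemma exists_out_iff {A : Finset (V × V)} {s t : V} {p : List V} (hp : IsPath A s t p)
    (v : V) : (∃ w, (v, w) ∈ pathEdges p) ↔ v ∈ p ∧ v ≠ t := by
  constructor
  · rintro ⟨w, hw⟩
    exact ⟨(mem_pathEdges_tail hw).1, path_edge_tail_ne_t hp hw⟩
  · rintro ⟨hv, hvt⟩
    obtain ⟨xs, ys, rfl⟩ := List.append_of_mem hv
    cases ys with
    | nil =>
      exfalso
      have hl := hp.2.2.1
      rw [List.getLast?_append_of_ne_nil _ (by simp), List.getLast?_singleton,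
        Option.some.injEq] at hl
      exact hvt hl
    | cons w ys' =>
      exact ⟨w, mem_pathEdges_iff.2 ⟨xs, ys', rfl⟩⟩

lemma exists_in_iff {A : Finset (V × V)} {s t : V} {p : List V} (hp : IsPath A s t p)
    (v : V) : (∃ u, (u, v) ∈ pathEdges p) ↔ v ∈ p ∧ v ≠ s := by
  constructor
  · rintro ⟨u, hu⟩
    exact ⟨(mem_of_mem_pathEdges hu).2, path_edge_head_ne_s hp hu⟩
  · rintro ⟨hv, hvs⟩
    obtain ⟨xs, ys, rfl⟩ := List.append_of_mem hv
    cases xs using List.reverseRecOn with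
    | nil =>
      exfalso
      have hh := hp.2.1
      rw [List.nil_append, List.head?_cons, Option.some.injEq] at hh
      exact hvs hh
    | append_singleton xs' u =>
      exact ⟨u, mem_pathEdges_iff.2 ⟨xs', ys, by simp⟩⟩

lemma outSum_chi {A : Finset (V × V)} {s t : V} {p : List V} (hp : IsPath A s t p) (v : V) :
    outSum A (chi p) v = if v ∈ p ∧ v ≠ t then 1 else 0 := by
  by_cases h : ∃ w, (v, w) ∈ pathEdges p
  · obtain ⟨w, hw⟩ := h
    rw [if_pos ((exists_out_iff hp v).1 ⟨w, hw⟩)]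
    have hsum : ∑ e ∈ A.filter (fun a => a.1 = v), chi p e = chi p (v, w) := by
      apply Finset.sum_eq_single_of_mem
      · exact Finset.mem_filter.2 ⟨mem_A_of_pathEdges hp.1 hw, rfl⟩
      · intro e heS hne
        obtain ⟨heA, he1⟩ := Finset.mem_filter.1 heS
        apply if_neg
        intro hmem
        exact hne (pathEdges_tail_unique hp.2.2.2 hmem hw (by rw [he1]))
    unfold outSum
    rw [hsum]
    exact if_pos hw
  · rw [if_neg (fun c => h ((exists_out_iff hp v).2 c))]
    apply Finset.sum_eq_zero
    intro e heS
    obtain ⟨heA, he1⟩ := Finset.mem_filter.1 heS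
    apply if_neg
    intro hmem
    exact h ⟨e.2, by rw [← he1]; simpa using hmem⟩

lemma inSum_chi {A : Finset (V × V)} {s t : V} {p : List V} (hp : IsPath A s t p) (v : V) :
    inSum A (chi p) v = if v ∈ p ∧ v ≠ s then 1 else 0 := by
  by_cases h : ∃ u, (u, v) ∈ pathEdges p
  · obtain ⟨u, hu⟩ := h
    rw [if_pos ((exists_in_iff hp v).1 ⟨u, hu⟩)]
    have hsum : ∑ e ∈ A.filter (fun a => a.2 = v), chi p e = chi p (u, v) := by
      apply Finset.sum_eq_single_of_mem
      · exact Finset.mem_filter.2 ⟨mem_A_of_pathEdges hp.1 hu, rfl⟩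
      · intro e heS hne
        obtain ⟨heA, he2⟩ := Finset.mem_filter.1 heS
        apply if_neg
        intro hmem
        exact hne (pathEdges_head_unique hp.2.2.2 hmem hu (by rw [he2]))
    unfold inSum
    rw [hsum]
    exact if_pos hu
  · rw [if_neg (fun c => h ((exists_in_iff hp v).2 c))]
    apply Finset.sum_eq_zero
    intro e heS
    obtain ⟨heA, he2⟩ := Finset.mem_filter.1 heS
    apply if_neg
    intro hmem
    exact h ⟨e.1, by rw [← he2]; simpa using hmem⟩

lemma chi_mem_flowPolytope {A : Finset (V × V)} {s t : V} (hst : s ≠ t) {p : List V}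
    (hp : IsPath A s t p) : chi p ∈ flowPolytope A s t := by
  refine ⟨?_, ?_, ?_, ?_⟩
  · intro e he
    apply if_neg
    intro hmem
    exact he (mem_A_of_pathEdges hp.1 hmem)
  · intro e
    unfold chi
    split <;> norm_num
  · intro v hvs hvt
    rw [outSum_chi hp, inSum_chi hp]
    by_cases hv : v ∈ p <;> simp [hv, hvs, hvt]
  · have hsp : s ∈ p := by
      cases p with
      | nil => exact absurd hp.2.1 (by simp)
      | cons x l =>
        have : x = s := by simpa using hp.2.1
        rw [← this]; exact List.mem_cons_self
    rw [outSum_chi hp, inSum_chi hp]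
    simp [hsp, hst]

lemma isExposed_coord (A : Finset (V × V)) (s t : V) (e : V × V) :
    IsExposed ℝ (flowPolytope A s t) {x ∈ flowPolytope A s t | x e = 0} := by
  intro h
  obtain ⟨x₀, hx₀⟩ := h
  refine ⟨-(ContinuousLinearMap.proj e), ?_⟩
  ext x
  simp only [Set.mem_sep_iff, ContinuousLinearMap.neg_apply, ContinuousLinearMap.proj_apply,
    neg_le_neg_iff]
  constructor
  · rintro ⟨hx, hxe⟩
    refine ⟨hx, fun y hy => ?_⟩
    have := hy.2.1 e
    rw [hxe]; linarith
  · rintro ⟨hx, hmax⟩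
    refine ⟨hx, ?_⟩
    have h1 := hmax x₀ hx₀.1
    have h0 : x₀ e = 0 := hx₀.2
    have hnn := hx.2.1 e
    rw [h0] at h1
    linarith

lemma inSum_eq_of_din_one {A : Finset (V × V)} {s t : V} (hA : Acyclic A) (hst : s ≠ t)
    {x : (V × V) → ℝ} (hx : IsFlow A s t x) {f : V × V} (hf : f ∈ redArcs A s t)
    (hdin : dminus A s t f.2 = 1) : inSum A x f.2 = x f := by
  unfold inSum
  apply Finset.sum_eq_single_of_mem f
    (show f ∈ A.filter (fun a => a.2 = f.2) from Finset.mem_filter.2 ⟨red_subset hf, rfl⟩)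
  intro e heS hne
  obtain ⟨heA, he2⟩ := Finset.mem_filter.1 heS
  by_contra hc
  have hpos : 0 < x e := lt_of_le_of_ne (hx.2.1 e) (Ne.symm hc)
  exact hne (red_in_unique hdin hf rfl (mem_red_of_flow_pos hA hst hx hpos) he2)

lemma outSum_eq_of_dout_one {A : Finset (V × V)} {s t : V} (hA : Acyclic A) (hst : s ≠ t)
    {x : (V × V) → ℝ} (hx : IsFlow A s t x) {f : V × V} (hf : f ∈ redArcs A s t)
    (hdout : dplus A s t f.1 = 1) : outSum A x f.1 = x f := by
  unfold outSum
  apply Finset.sum_eq_single_of_mem f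
    (show f ∈ A.filter (fun a => a.1 = f.1) from Finset.mem_filter.2 ⟨red_subset hf, rfl⟩)
  intro e heS hne
  obtain ⟨heA, he1⟩ := Finset.mem_filter.1 heS
  by_contra hc
  have hpos : 0 < x e := lt_of_le_of_ne (hx.2.1 e) (Ne.symm hc)
  exact hne (red_out_unique hdout hf rfl (mem_red_of_flow_pos hA hst hx hpos) he1)

lemma flow_const_on_chain {A : Finset (V × V)} {s t : V} (hA : Acyclic A) (hst : s ≠ t)
    {x : (V × V) → ℝ} (hx : IsFlow A s t x) :
    ∀ (c : List V), c.Chain' (fun u v => (u, v) ∈ redArcs A s t) →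
      (∀ v ∈ c.tail.dropLast, dminus A s t v = 1 ∧ dplus A s t v = 1) →
      ∀ e ∈ pathEdges c, ∀ e' ∈ pathEdges c, x e = x e' := by
  have key : ∀ (c : List V) (u v : V),
      (u :: v :: c).Chain' (fun u v => (u, v) ∈ redArcs A s t) →
      (∀ w ∈ (u :: v :: c).tail.dropLast, dminus A s t w = 1 ∧ dplus A s t w = 1) →
      ∀ e ∈ pathEdges (u :: v :: c), x e = x (u, v) := by
    intro c
    induction c with
    | nil =>
      intro u v _ _ e he
      rw [pathEdges_cons_cons] at he
      rcases List.mem_cons.1 he with rfl | he'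
      · rfl
      · exact absurd he' (by simp [pathEdges, List.zip])
    | cons w r ih =>
      intro u v hc hint e he
      rw [pathEdges_cons_cons] at he
      rcases List.mem_cons.1 he with rfl | he'
      · rfl
      · have hc' := List.isChain_cons_cons.1 hc
        have h2 : x e = x (v, w) := by
          refine ih v w hc'.2 ?_ e he'
          intro w' hw'
          apply hint
          simp only [List.tail_cons] at hw' ⊢
          rw [List.dropLast_cons_of_ne_nil (by simp)]
          exact List.mem_cons_of_mem _ hw'
        rw [h2]
        have huv : (u, v) ∈ redArcs A s t := hc'.1
        have hvw : (v, w) ∈ redArcs A s t := (List.isChain_cons_cons.1 hc'.2).1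
        obtain ⟨hdin, hdout⟩ := hint v (by
          simp only [List.tail_cons]
          rw [List.dropLast_cons_of_ne_nil (by simp)]
          exact List.mem_cons_self)
        have h3 : inSum A x v = x (u, v) :=
          inSum_eq_of_din_one hA hst hx (f := (u, v)) huv hdin
        have h4 : outSum A x v = x (v, w) :=
          outSum_eq_of_dout_one hA hst hx (f := (v, w)) hvw hdout
        have hvs : v ≠ s := red_head_ne_s (e := (u, v)) huv
        have hvt : v ≠ t := red_tail_ne_t (e := (v, w)) hvw
        have h5 := hx.2.2.1 v hvs hvt
        rw [h3, h4] at h5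
        exact h5
  intro c hc hint e he e' he'
  cases c with
  | nil => exact absurd he (by simp [pathEdges])
  | cons u c' =>
    cases c' with
    | nil => exact absurd he (by simp [pathEdges, List.zip])
    | cons v rest =>
      rw [key rest u v hc hint e he, key rest u v hc hint e' he']

lemma corridor_faces_eq {A : Finset (V × V)} {s t : V} (hA : Acyclic A) (hst : s ≠ t)
    {a b : V × V} {c : List V} (hc : IsCorridor A s t c)
    (hac : a ∈ pathEdges c) (hbc : b ∈ pathEdges c) :
    {x ∈ flowPolytope A s t | x a = 0} = {x ∈ flowPolytope A s t | x b = 0} := by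
  ext x
  simp only [Set.mem_sep_iff]
  constructor
  · rintro ⟨hx, hxa⟩
    exact ⟨hx, by rw [flow_const_on_chain hA hst hx c hc.2.1 hc.2.2.1 b hbc a hac]; exact hxa⟩
  · rintro ⟨hx, hxb⟩
    exact ⟨hx, by rw [flow_const_on_chain hA hst hx c hc.2.1 hc.2.2.1 a hac b hbc]; exact hxb⟩

lemma pathEdges_mono_append {c : List V} {w : V} {e : V × V} (h : e ∈ pathEdges c) :
    e ∈ pathEdges (c ++ [w]) := by
  obtain ⟨xs, ys, rfl⟩ := mem_pathEdges_iff.1 h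
  exact mem_pathEdges_iff.2 ⟨xs, ys ++ [w], by simp⟩

lemma pathEdges_mono_cons {c : List V} {w : V} {e : V × V} (h : e ∈ pathEdges c) :
    e ∈ pathEdges (w :: c) := by
  obtain ⟨xs, ys, rfl⟩ := mem_pathEdges_iff.1 h
  exact mem_pathEdges_iff.2 ⟨w :: xs, ys, by simp⟩

lemma mem_tail_cases {c : List V} {z : V} (hz : c.getLast? = some z) {v : V}
    (hv : v ∈ c.tail) : v ∈ c.tail.dropLast ∨ v = z := by
  cases c with
  | nil => simp at hv
  | cons x rest =>
    simp only [List.tail_cons] at hv ⊢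
    cases rest with
    | nil => simp at hv
    | cons y r =>
      rw [List.getLast?_cons_cons] at hz
      rw [← List.dropLast_append_getLast? z hz] at hv
      rcases List.mem_append.1 hv with h | h
      · exact Or.inl h
      · exact Or.inr (by simpa using h)

lemma mem_dropLast_cases {c : List V} {h0 : V} (hh : c.head? = some h0) {v : V}
    (hv : v ∈ c.dropLast) : v = h0 ∨ v ∈ c.tail.dropLast := by
  cases c with
  | nil => simp at hv
  | cons x rest =>
    simp only [List.head?_cons, Option.some.injEq] at hh
    subst hh
    cases rest with
    | nil => simp at hv
    | cons y r =>
      rw [List.dropLast_cons_of_ne_nil (by simp)] at hv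
      rcases List.mem_cons.1 hv with rfl | hv'
      · exact Or.inl rfl
      · exact Or.inr hv'

lemma extend_forward {A : Finset (V × V)} {s t : V} (hA : Acyclic A) :
    ∀ n (c : List V) (z : V), mOut A z ≤ n → 2 ≤ c.length →
      c.Chain' (fun u v => (u, v) ∈ redArcs A s t) → c.getLast? = some z →
      (∀ v ∈ c.tail.dropLast, dminus A s t v = 1 ∧ dplus A s t v = 1) →
      ∃ (c' : List V) (z' : V), c'.Chain' (fun u v => (u, v) ∈ redArcs A s t) ∧
        2 ≤ c'.length ∧ c'.head? = c.head? ∧ c'.getLast? = some z' ∧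
        (∀ v ∈ c'.tail.dropLast, dminus A s t v = 1 ∧ dplus A s t v = 1) ∧
        ¬(dminus A s t z' = 1 ∧ dplus A s t z' = 1) ∧
        (∀ e ∈ pathEdges c, e ∈ pathEdges c') := by
  intro n
  induction n with
  | zero =>
    intro c z hn hlen hchain hlast hint
    by_cases h : dminus A s t z = 1 ∧ dplus A s t z = 1
    · exfalso
      obtain ⟨e, he, he1⟩ := dplus_out_exists h.2
      have : (z, e.2) ∈ A := red_subset (by rw [← he1]; simpa using he)
      have := mOut_lt hA this
      omega
    · exact ⟨c, z, hchain, hlen, rfl, hlast, hint, h, fun e he => he⟩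
  | succ n ih =>
    intro c z hn hlen hchain hlast hint
    by_cases h : dminus A s t z = 1 ∧ dplus A s t z = 1
    · obtain ⟨e, he, he1⟩ := dplus_out_exists h.2
      have hzw : (z, e.2) ∈ redArcs A s t := by rw [← he1]; simpa using he
      have hcne : c ≠ [] := by intro hc; rw [hc] at hlen; simp at hlen
      have hchain' : (c ++ [e.2]).Chain' (fun u v => (u, v) ∈ redArcs A s t) := by
        rw [List.Chain', List.isChain_append]
        refine ⟨hchain, List.isChain_singleton _, ?_⟩
        intro p hp q hq
        rw [hlast] at hp
        simp only [Option.mem_def, Option.some.injEq] at hp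
        simp only [List.head?_cons, Option.mem_def, Option.some.injEq] at hq
        subst hp; subst hq; exact hzw
      have hint' : ∀ v ∈ (c ++ [e.2]).tail.dropLast,
          dminus A s t v = 1 ∧ dplus A s t v = 1 := by
        intro v hv
        rw [List.tail_append_of_ne_nil hcne] at hv
        rw [List.dropLast_concat] at hv
        rcases mem_tail_cases hlast (by exact hv) with h1 | rfl
        · exact hint v h1
        · exact h
      obtain ⟨c', z', r1, r2, r3, r4, r5, r6, r7⟩ :=
        ih (c ++ [e.2]) e.2 (by have := mOut_lt hA (red_subset hzw); omega)
          (by rw [List.length_append]; omega) hchain' (by simp) hint'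
      refine ⟨c', z', r1, r2, ?_, r4, r5, r6, fun e' he' => r7 e' (pathEdges_mono_append he')⟩
      · rw [r3]
        cases c with
        | nil => exact absurd rfl hcne
        | cons x rest => simp
    · exact ⟨c, z, hchain, hlen, rfl, hlast, hint, h, fun e he => he⟩

lemma extend_backward {A : Finset (V × V)} {s t : V} (hA : Acyclic A) :
    ∀ n (c : List V) (h0 : V), mIn A h0 ≤ n → 2 ≤ c.length →
      c.Chain' (fun u v => (u, v) ∈ redArcs A s t) → c.head? = some h0 →
      (∀ v ∈ c.tail.dropLast, dminus A s t v = 1 ∧ dplus A s t v = 1) →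
      ∃ (c' : List V) (h' : V), c'.Chain' (fun u v => (u, v) ∈ redArcs A s t) ∧
        2 ≤ c'.length ∧ c'.getLast? = c.getLast? ∧ c'.head? = some h' ∧
        (∀ v ∈ c'.tail.dropLast, dminus A s t v = 1 ∧ dplus A s t v = 1) ∧
        ¬(dminus A s t h' = 1 ∧ dplus A s t h' = 1) ∧
        (∀ e ∈ pathEdges c, e ∈ pathEdges c') := by
  intro n
  induction n with
  | zero =>
    intro c h0 hn hlen hchain hhead hint
    by_cases h : dminus A s t h0 = 1 ∧ dplus A s t h0 = 1
    · exfalso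
      obtain ⟨e, he, he2⟩ := dminus_in_exists h.1
      have : (e.1, h0) ∈ A := red_subset (by rw [← he2]; simpa using he)
      have := mIn_lt hA this
      omega
    · exact ⟨c, h0, hchain, hlen, rfl, hhead, hint, h, fun e he => he⟩
  | succ n ih =>
    intro c h0 hn hlen hchain hhead hint
    by_cases h : dminus A s t h0 = 1 ∧ dplus A s t h0 = 1
    · obtain ⟨e, he, he2⟩ := dminus_in_exists h.1
      have hwh : (e.1, h0) ∈ redArcs A s t := by rw [← he2]; simpa using he
      have hcne : c ≠ [] := by intro hc; rw [hc] at hlen; simp at hlen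
      have hchain' : (e.1 :: c).Chain' (fun u v => (u, v) ∈ redArcs A s t) := by
        cases c with
        | nil => exact absurd rfl hcne
        | cons x rest =>
          have hx : x = h0 := by simpa using hhead
          subst hx
          exact List.isChain_cons_cons.2 ⟨hwh, hchain⟩
      have hint' : ∀ v ∈ (e.1 :: c).tail.dropLast,
          dminus A s t v = 1 ∧ dplus A s t v = 1 := by
        intro v hv
        simp only [List.tail_cons] at hv
        rcases mem_dropLast_cases hhead hv with rfl | hv'
        · exact h
        · exact hint v hv'
      obtain ⟨c', h', r1, r2, r3, r4, r5, r6, r7⟩ :=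
        ih (e.1 :: c) e.1 (by have := mIn_lt hA (red_subset hwh); omega)
          (by simp; omega) hchain' (by simp) hint'
      refine ⟨c', h', r1, r2, ?_, r4, r5, r6, fun e' he' => r7 e' (pathEdges_mono_cons he')⟩
      · rw [r3]
        cases c with
        | nil => exact absurd rfl hcne
        | cons x rest => rfl
    · exact ⟨c, h0, hchain, hlen, rfl, hhead, hint, h, fun e he => he⟩

lemma extend_to_corridor {A : Finset (V × V)} {s t : V} (hA : Acyclic A) {c : List V}
    (hlen : 2 ≤ c.length) (hchain : c.Chain' (fun u v => (u, v) ∈ redArcs A s t))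
    (hint : ∀ v ∈ c.tail.dropLast, dminus A s t v = 1 ∧ dplus A s t v = 1) :
    ∃ c', IsCorridor A s t c' ∧ ∀ e ∈ pathEdges c, e ∈ pathEdges c' := by
  have hcne : c ≠ [] := by intro hc; rw [hc] at hlen; simp at hlen
  obtain ⟨z, hz⟩ : ∃ z, c.getLast? = some z :=
    ⟨c.getLast hcne, List.getLast?_eq_getLast_of_ne_nil hcne⟩
  obtain ⟨c₁, z₁, q1, q2, q3, q4, q5, q6, q7⟩ :=
    extend_forward hA (mOut A z) c z le_rfl hlen hchain hz hint
  have hc₁ne : c₁ ≠ [] := by intro hc; rw [hc] at q2; simp at q2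
  obtain ⟨h₁, hh₁⟩ : ∃ h₁, c₁.head? = some h₁ := by
    cases c₁ with
    | nil => exact absurd rfl hc₁ne
    | cons x rest => exact ⟨x, rfl⟩
  obtain ⟨c₂, h₂, p1, p2, p3, p4, p5, p6, p7⟩ :=
    extend_backward hA (mIn A h₁) c₁ h₁ le_rfl q2 q1 hh₁ q5
  refine ⟨c₂, ⟨p2, p1, p5, ?_, ?_⟩, fun e he => p7 e (q7 e he)⟩
  · intro hh hhh
    rw [p4, Option.some.injEq] at hhh
    rw [← hhh]
    rcases Classical.em (dminus A s t h₂ = 1) with h1 | h1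
    · exact Or.inr (fun h2 => p6 ⟨h1, h2⟩)
    · exact Or.inl h1
  · intro zz hzz
    rw [p3, q4, Option.some.injEq] at hzz
    rw [← hzz]
    rcases Classical.em (dminus A s t z₁ = 1) with h1 | h1
    · exact Or.inr (fun h2 => q6 ⟨h1, h2⟩)
    · exact Or.inl h1

lemma face_eq_path_equiv {A : Finset (V × V)} {s t : V} (hst : s ≠ t) {f g : V × V}
    (h : {x ∈ flowPolytope A s t | x f = 0} = {x ∈ flowPolytope A s t | x g = 0})
    {p : List V} (hp : IsPath A s t p) (hfp : f ∈ pathEdges p) : g ∈ pathEdges p := by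
  by_contra hg
  have hchi : chi p ∈ flowPolytope A s t := chi_mem_flowPolytope hst hp
  have h1 : chi p ∈ {x ∈ flowPolytope A s t | x g = 0} := ⟨hchi, if_neg hg⟩
  rw [← h] at h1
  have h2 : chi p f = 0 := h1.2
  rw [chi, if_pos hfp] at h2
  norm_num at h2

lemma edge_after {A : Finset (V × V)} {s t : V} (hA : Acyclic A) {p : List V}
    (hp : IsPath A s t p) {f b : V × V} (hf : f ∈ pathEdges p) (hbp : b ∈ pathEdges p)
    (hfb : f ≠ b) (hbA : b ∈ A) (hfA : f ∈ A)
    (hR : Relation.ReflTransGen (fun u v => (u, v) ∈ redArcs A s t) f.2 b.1) :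
    ∃ xs ys, p = xs ++ f.1 :: f.2 :: ys ∧ b ∈ pathEdges (f.2 :: ys) := by
  obtain ⟨xs, ys, rfl⟩ := mem_pathEdges_iff.1 hf
  refine ⟨xs, ys, rfl, ?_⟩
  have hsplit := pathEdges_append xs f.1 (f.2 :: ys)
  rw [hsplit] at hbp
  rcases List.mem_append.1 hbp with hb1 | hb2
  · exfalso
    have hb2mem : b.2 ∈ xs ++ [f.1] := (mem_of_mem_pathEdges hb1).2
    have hlast : (xs ++ [f.1]).getLast? = some f.1 := by simp
    have hchainpre : (xs ++ [f.1]).Chain' (fun u v => (u, v) ∈ A) :=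
      hp.1.prefix ⟨f.2 :: ys, by simp⟩
    have hreach : Relation.ReflTransGen (fun u v => (u, v) ∈ A) b.2 f.1 :=
      chain'_reflTransGen_last hchainpre hb2mem hlast
    have hRA : Relation.ReflTransGen (fun u v => (u, v) ∈ A) f.2 b.1 :=
      Relation.ReflTransGen.mono (fun u v h => red_subset h) _ _ hR
    have hcyc : Relation.TransGen (fun u v => (u, v) ∈ A) f.2 f.2 := by
      have t1 : Relation.ReflTransGen (fun u v => (u, v) ∈ A) f.2 f.1 :=
        (hRA.trans (Relation.ReflTransGen.head (show (b.1, b.2) ∈ A by simpa using hbA)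
          hreach))
      exact Relation.TransGen.tail' t1 (show (f.1, f.2) ∈ A by simpa using hfA)
    exact hA f.2 hcyc
  · rw [pathEdges_cons_cons] at hb2
    rcases List.mem_cons.1 hb2 with hbf | hbok
    · exact absurd (show f = b by rw [hbf]) hfb
    · exact hbok

lemma din_one_of_force {A : Finset (V × V)} {s t : V} (hA : Acyclic A) (hst : s ≠ t)
    {f b : V × V} (hf : f ∈ redArcs A s t) (hbred : b ∈ redArcs A s t) (hfb : f ≠ b)
    (hface : {x ∈ flowPolytope A s t | x f = 0} = {x ∈ flowPolytope A s t | x b = 0})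
    (hR : Relation.ReflTransGen (fun u v => (u, v) ∈ redArcs A s t) f.2 b.1) :
    dminus A s t f.2 = 1 := by
  obtain ⟨hfA, p, hp, hfp⟩ := Finset.mem_filter.1 hf
  have hbp : b ∈ pathEdges p := face_eq_path_equiv hst hface hp hfp
  obtain ⟨xs, ys, hpdec, hbys⟩ := edge_after hA hp hfp hbp hfb (red_subset hbred) hfA hR
  -- uniqueness of in-arcs at f.2
  have huniq : ∀ e ∈ redArcs A s t, e.2 = f.2 → e = f := by
    intro e hered he2
    obtain ⟨heA, q, hq, heq⟩ := Finset.mem_filter.1 hered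
    obtain ⟨qs, zs, hqdec⟩ := mem_pathEdges_iff.1 heq
    rw [he2] at hqdec
    -- spliced path r
    set r := (qs ++ [e.1]) ++ f.2 :: ys with hr
    have hchain_q_pre : (qs ++ [e.1]).Chain' (fun u v => (u, v) ∈ A) := by
      apply hq.1.prefix
      rw [hqdec]
      exact ⟨f.2 :: zs, by simp⟩
    have hchain_p_suf : (f.2 :: ys).Chain' (fun u v => (u, v) ∈ A) := by
      apply hp.1.suffix
      rw [hpdec]
      exact ⟨xs ++ [f.1], by simp⟩
    have he1f2 : (e.1, f.2) ∈ A := by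
      rw [← he2]; simpa using heA
    have hrpath : IsPath A s t r := by
      refine ⟨chain'_append_singleton_cons hchain_q_pre hchain_p_suf he1f2, ?_, ?_, ?_⟩
      · have : r = qs ++ e.1 :: f.2 :: ys := by simp [hr]
        rw [this, head?_append_eq (r' := f.2 :: zs), ← hqdec]
        exact hq.2.1
      · rw [hr, List.getLast?_append_of_ne_nil _ (by simp)]
        have hplast := hp.2.2.1
        rw [hpdec, List.getLast?_append_of_ne_nil _ (by simp),
          List.getLast?_cons_cons] at hplast
        exact hplast
      · exact hA.nodup_chain' (chain'_append_singleton_cons hchain_q_pre hchain_p_suf he1f2)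
    have hbr : b ∈ pathEdges r := by
      rw [hr, pathEdges_append (qs ++ [e.1]) f.2 ys]
      exact List.mem_append.2 (Or.inr hbys)
    have hfr : f ∈ pathEdges r := face_eq_path_equiv hst hface.symm hrpath hbr
    rw [hr, pathEdges_append (qs ++ [e.1]) f.2 ys] at hfr
    rcases List.mem_append.1 hfr with hE1 | hE2
    · -- f in prefix edges :  nodup forces f = (e.1, f.2)
      have hnd : ((qs ++ [e.1]) ++ [f.2]).Nodup := by
        refine List.Nodup.sublist ?_ hq.2.2.2
        rw [hqdec]
        have : (qs ++ [e.1]) ++ [f.2] ++ zs = qs ++ e.1 :: f.2 :: zs := by simp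
        rw [← this]
        exact List.sublist_append_left _ _
      have hein : (e.1, f.2) ∈ pathEdges ((qs ++ [e.1]) ++ [f.2]) :=
        mem_pathEdges_iff.2 ⟨qs, [], by simp⟩
      have hfe : f = (e.1, f.2) := pathEdges_head_unique hnd hE1 hein rfl
      rw [hfe]
      exact Prod.ext_iff.2 ⟨rfl, he2⟩
    · exfalso
      have hf1mem : f.1 ∈ f.2 :: ys := (mem_of_mem_pathEdges hE2).1
      have hreach : Relation.ReflTransGen (fun u v => (u, v) ∈ A) f.2 f.1 :=
        chain'_reflTransGen_head hchain_p_suf rfl hf1mem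
      exact hA f.1 (Relation.TransGen.head' (show (f.1, f.2) ∈ A by simpa using hfA) hreach)
  rw [dminus, Finset.card_eq_one]
  refine ⟨f, Finset.eq_singleton_iff_unique_mem.2 ⟨Finset.mem_filter.2 ⟨hf, rfl⟩, ?_⟩⟩
  intro e he
  obtain ⟨h1, h2⟩ := Finset.mem_filter.1 he
  exact huniq e h1 h2

lemma dout_step {A : Finset (V × V)} {s t : V} (hA : Acyclic A) (hst : s ≠ t)
    {f b : V × V} (hf : f ∈ redArcs A s t) (hbred : b ∈ redArcs A s t) (hfb : f ≠ b)
    (hface : {x ∈ flowPolytope A s t | x f = 0} = {x ∈ flowPolytope A s t | x b = 0})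
    (hFbfacet : IsFacetOf (flowPolytope A s t) {x ∈ flowPolytope A s t | x b = 0})
    (hR : Relation.ReflTransGen (fun u v => (u, v) ∈ redArcs A s t) f.2 b.1) :
    ∃ f', f' ∈ redArcs A s t ∧ f'.1 = f.2 ∧ dminus A s t f.2 = 1 ∧ dplus A s t f.2 = 1 ∧
      ({x ∈ flowPolytope A s t | x f' = 0} = {x ∈ flowPolytope A s t | x b = 0}) ∧
      (f' = b ∨ (f' ≠ b ∧
        Relation.ReflTransGen (fun u v => (u, v) ∈ redArcs A s t) f'.2 b.1)) := by
  have hdin : dminus A s t f.2 = 1 := din_one_of_force hA hst hf hbred hfb hface hR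
  obtain ⟨hfA, p, hp, hfp⟩ := Finset.mem_filter.1 hf
  have hf' : f ∈ redArcs A s t := Finset.mem_filter.2 ⟨hfA, p, hp, hfp⟩
  have hbp : b ∈ pathEdges p := face_eq_path_equiv hst hface hp hfp
  obtain ⟨xs, ys, hpdec, hbys⟩ := edge_after hA hp hfp hbp hfb (red_subset hbred) hfA hR
  obtain ⟨y, ys', rfl⟩ : ∃ y ys', ys = y :: ys' := by
    cases ys with
    | nil => exact absurd hbys (by simp [pathEdges, List.zip])
    | cons y ys' => exact ⟨y, ys', rfl⟩
  have hf'p : (f.2, y) ∈ pathEdges p :=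
    mem_pathEdges_iff.2 ⟨xs ++ [f.1], ys', by simp [hpdec]⟩
  have hf'red : (f.2, y) ∈ redArcs A s t := mem_red_of_path hp hf'p
  have hvs : f.2 ≠ s := red_head_ne_s hf'
  have hvt : f.2 ≠ t := red_tail_ne_t (e := (f.2, y)) hf'red
  have hX : ∀ e ∈ redArcs A s t, e.1 = f.2 →
      {x ∈ flowPolytope A s t | x f = 0} ⊆ {x ∈ flowPolytope A s t | x e = 0} := by
    intro e hered he1 x hxf
    obtain ⟨hxF, hxf0⟩ := hxf
    have hxFl : IsFlow A s t x := hxF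
    refine ⟨hxF, ?_⟩
    have h1 : inSum A x f.2 = 0 := by
      rw [inSum_eq_of_din_one hA hst hxFl hf' hdin, hxf0]
    have h2 : outSum A x f.2 = 0 := by rw [hxFl.2.2.1 f.2 hvs hvt, h1]
    have h3 : x e ≤ outSum A x f.2 := by
      apply Finset.single_le_sum (fun i _ => hxFl.2.1 i)
      exact Finset.mem_filter.2 ⟨red_subset hered, he1⟩
    have h4 := hxFl.2.1 e
    linarith
  have hY : ∀ e ∈ redArcs A s t, e.1 = f.2 →
      {x ∈ flowPolytope A s t | x e = 0} = {x ∈ flowPolytope A s t | x b = 0} := by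
    intro e hered he1
    apply hFbfacet.2.2
    · exact isExposed_coord A s t e
    · intro hEq
      obtain ⟨heA, q, hq, heq⟩ := Finset.mem_filter.1 hered
      have hchiq : chi q ∈ flowPolytope A s t := chi_mem_flowPolytope hst hq
      have hmem : chi q ∈ {x ∈ flowPolytope A s t | x e = 0} := by rw [hEq]; exact hchiq
      have h0 : chi q e = 0 := hmem.2
      rw [chi, if_pos heq] at h0
      norm_num at h0
    · rw [← hface]; exact hX e hered he1
  have hZ : ∀ e ∈ redArcs A s t, e.1 = f.2 → e = (f.2, y) := by
    intro e hered he1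
    by_contra hne
    obtain ⟨heA, q, hq, heq⟩ := Finset.mem_filter.1 hered
    obtain ⟨qs, zs, hqdec⟩ := mem_pathEdges_iff.1 heq
    rw [he1] at hqdec
    have hqsne : qs ≠ [] := by
      intro h0
      have hh := hq.2.1
      rw [hqdec, h0, List.nil_append, List.head?_cons, Option.some.injEq] at hh
      exact hvs hh
    obtain ⟨qs', u, rfl⟩ := qs.eq_nil_or_concat.resolve_left hqsne
    have hin : (u, f.2) ∈ pathEdges q :=
      mem_pathEdges_iff.2 ⟨qs', e.2 :: zs, by simp [hqdec]⟩
    have hinred := mem_red_of_path hq hin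
    have hinf : (u, f.2) = f := red_in_unique hdin hf' rfl hinred rfl
    have hfq : f ∈ pathEdges q := hinf ▸ hin
    have hf'q : (f.2, y) ∉ pathEdges q := by
      intro hmem
      exact hne ((pathEdges_tail_unique hq.2.2.2 heq hmem (by rw [he1])).symm ▸ rfl :
        e = (f.2, y))
    have hYf' := hY (f.2, y) hf'red rfl
    have hchiq := chi_mem_flowPolytope hst hq
    have hmem2 : chi q ∈ {x ∈ flowPolytope A s t | x (f.2, y) = 0} := ⟨hchiq, if_neg hf'q⟩
    rw [hYf', ← hface] at hmem2
    have h0 : chi q f = 0 := hmem2.2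
    rw [chi, if_pos hfq] at h0
    norm_num at h0
  have hdout : dplus A s t f.2 = 1 := by
    rw [dplus, Finset.card_eq_one]
    refine ⟨(f.2, y), Finset.eq_singleton_iff_unique_mem.2
      ⟨Finset.mem_filter.2 ⟨hf'red, rfl⟩, ?_⟩⟩
    intro e he
    obtain ⟨h1, h2⟩ := Finset.mem_filter.1 he
    exact hZ e h1 h2
  refine ⟨(f.2, y), hf'red, rfl, hdin, hdout, hY (f.2, y) hf'red rfl, ?_⟩
  by_cases hb' : (f.2, y) = b
  · exact Or.inl hb'
  · refine Or.inr ⟨hb', ?_⟩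
    rw [pathEdges_cons_cons] at hbys
    rcases List.mem_cons.1 hbys with hbf | hbok
    · exact absurd hbf.symm hb'
    · have hb1mem : b.1 ∈ y :: ys' := (mem_of_mem_pathEdges hbok).1
      have hchainred : (y :: ys').Chain' (fun u v => (u, v) ∈ redArcs A s t) := by
        apply (chain'_red_of_path hp).suffix
        rw [hpdec]
        exact ⟨xs ++ [f.1, f.2], by simp⟩
      exact chain'_reflTransGen_head hchainred rfl hb1mem

lemma main_walk {A : Finset (V × V)} {s t : V} (hA : Acyclic A) (hst : s ≠ t)
    {b : V × V} (hbred : b ∈ redArcs A s t)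
    (hFbfacet : IsFacetOf (flowPolytope A s t) {x ∈ flowPolytope A s t | x b = 0}) :
    ∀ n (f : V × V), mOut A f.2 ≤ n → f ∈ redArcs A s t →
      ({x ∈ flowPolytope A s t | x f = 0} = {x ∈ flowPolytope A s t | x b = 0}) →
      f ≠ b → Relation.ReflTransGen (fun u v => (u, v) ∈ redArcs A s t) f.2 b.1 →
      ∃ l : List V, (f.2 :: l).Chain' (fun u v => (u, v) ∈ redArcs A s t) ∧
        (f.2 :: l).getLast? = some b.1 ∧
        ∀ v ∈ f.2 :: l, dminus A s t v = 1 ∧ dplus A s t v = 1 := by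
  intro n
  induction n with
  | zero =>
    intro f hn hf hface hfb hR
    exfalso
    obtain ⟨f', hf'red, hf'1, hdin, hdout, hface', hcase⟩ :=
      dout_step hA hst hf hbred hfb hface hFbfacet hR
    have harc : (f.2, f'.2) ∈ A := red_subset (by rw [← hf'1]; simpa using hf'red)
    have := mOut_lt hA harc
    omega
  | succ n ih =>
    intro f hn hf hface hfb hR
    obtain ⟨f', hf'red, hf'1, hdin, hdout, hface', hcase⟩ :=
      dout_step hA hst hf hbred hfb hface hFbfacet hR
    rcases hcase with rfl | ⟨hne, hR'⟩
    · refine ⟨[], List.isChain_singleton _, ?_, ?_⟩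
      · rw [List.getLast?_singleton, ← hf'1]
      · intro v hv
        rw [List.mem_singleton] at hv
        subst hv
        exact ⟨hdin, hdout⟩
    · have harc : (f.2, f'.2) ∈ redArcs A s t := by rw [← hf'1]; simpa using hf'red
      obtain ⟨l', c1, c2, c3⟩ := ih f'
        (by have := mOut_lt hA (red_subset harc); omega) hf'red hface' hne hR'
      refine ⟨f'.2 :: l', List.isChain_cons_cons.2 ⟨harc, c1⟩,
        by rw [List.getLast?_cons_cons]; exact c2, ?_⟩
      intro v hv
      rcases List.mem_cons.1 hv with rfl | hv'
      · exact ⟨hdin, hdout⟩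
      · exact c3 v hv'

lemma build_corridor {A : Finset (V × V)} {s t : V} (hA : Acyclic A) (hst : s ≠ t)
    {f g : V × V} (hfred : f ∈ redArcs A s t) (hgred : g ∈ redArcs A s t) (hfg : f ≠ g)
    (hface : {x ∈ flowPolytope A s t | x f = 0} = {x ∈ flowPolytope A s t | x g = 0})
    (hFgfacet : IsFacetOf (flowPolytope A s t) {x ∈ flowPolytope A s t | x g = 0})
    (hR : Relation.ReflTransGen (fun u v => (u, v) ∈ redArcs A s t) f.2 g.1) :
    ∃ c, IsCorridor A s t c ∧ f ∈ pathEdges c ∧ g ∈ pathEdges c := by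
  obtain ⟨l, c1, c2, c3⟩ :=
    main_walk hA hst hgred hFgfacet (mOut A f.2) f le_rfl hfred hface hfg hR
  set c₀ : List V := f.1 :: f.2 :: (l ++ [g.2]) with hc₀
  have hchain : c₀.Chain' (fun u v => (u, v) ∈ redArcs A s t) := by
    apply List.isChain_cons_cons.2
    refine ⟨by simpa using hfred, ?_⟩
    rw [show f.2 :: (l ++ [g.2]) = (f.2 :: l) ++ [g.2] from rfl, List.isChain_append]
    refine ⟨c1, List.isChain_singleton _, ?_⟩
    intro p hp q hq
    rw [c2] at hp
    simp only [Option.mem_def, Option.some.injEq] at hp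
    simp only [List.head?_cons, Option.mem_def, Option.some.injEq] at hq
    subst hp; subst hq
    simpa using hgred
  have hint : ∀ v ∈ c₀.tail.dropLast, dminus A s t v = 1 ∧ dplus A s t v = 1 := by
    intro v hv
    apply c3
    simp only [hc₀, List.tail_cons] at hv
    rw [show f.2 :: (l ++ [g.2]) = (f.2 :: l) ++ [g.2] from rfl, List.dropLast_concat] at hv
    exact hv
  have hlen : 2 ≤ c₀.length := by simp [hc₀]
  obtain ⟨c', hc', hsub⟩ := extend_to_corridor hA hlen hchain hint
  refine ⟨c', hc', hsub f ?_, hsub g ?_⟩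
  · exact mem_pathEdges_iff.2 ⟨[], l ++ [g.2], by simp [hc₀]⟩
  · have h5 : (f.2 :: l).dropLast ++ [g.1] = f.2 :: l := List.dropLast_append_getLast? g.1 c2
    refine mem_pathEdges_iff.2 ⟨f.1 :: (f.2 :: l).dropLast, [], ?_⟩
    rw [show (f.1 :: (f.2 :: l).dropLast) ++ g.1 :: g.2 :: ([] : List V) =
      f.1 :: (((f.2 :: l).dropLast ++ [g.1]) ++ [g.2]) by simp, h5]
    rfl

/-- If `x(a) ≥ 0` and `x(b) ≥ 0` both define facets of the flow polytope, these facets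
coincide iff `a` and `b` belong to the same corridor. -/
theorem stmt13 (A : Finset (V × V)) (s t : V) (hA : Acyclic A)
    (a b : V × V) (ha : a ∈ redArcs A s t) (hb : b ∈ redArcs A s t)
    (hFa : IsFacetOf (flowPolytope A s t) {x ∈ flowPolytope A s t | x a = 0})
    (hFb : IsFacetOf (flowPolytope A s t) {x ∈ flowPolytope A s t | x b = 0}) :
    ({x ∈ flowPolytope A s t | x a = 0} = {x ∈ flowPolytope A s t | x b = 0}) ↔
      ∃ c : List V, IsCorridor A s t c ∧ a ∈ pathEdges c ∧ b ∈ pathEdges c := by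
  have hst : s ≠ t := s_ne_t_of_red ha
  constructor
  · intro hEq
    by_cases hab : a = b
    · subst hab
      have hlen : 2 ≤ ([a.1, a.2] : List V).length := by simp
      have hchain : ([a.1, a.2] : List V).Chain' (fun u v => (u, v) ∈ redArcs A s t) :=
        List.isChain_pair.2 (by simpa using ha)
      have hint : ∀ v ∈ ([a.1, a.2] : List V).tail.dropLast,
          dminus A s t v = 1 ∧ dplus A s t v = 1 := by simp
      obtain ⟨c', hc', hsub⟩ := extend_to_corridor hA hlen hchain hint
      have haedge : a ∈ pathEdges [a.1, a.2] := mem_pathEdges_iff.2 ⟨[], [], by simp⟩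
      exact ⟨c', hc', hsub a haedge, hsub a haedge⟩
    · obtain ⟨haA, p, hp, hap⟩ := Finset.mem_filter.1 ha
      have hared : a ∈ redArcs A s t := ha
      have hbp : b ∈ pathEdges p := face_eq_path_equiv hst hEq hp hap
      obtain ⟨xs, ys, rfl⟩ := mem_pathEdges_iff.1 hap
      have hchainred := chain'_red_of_path hp
      have hsplit := pathEdges_append xs a.1 (a.2 :: ys)
      rw [hsplit] at hbp
      rcases List.mem_append.1 hbp with hb1 | hb2
      · have hRba : Relation.ReflTransGen (fun u v => (u, v) ∈ redArcs A s t) b.2 a.1 := by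
          have hcpre : (xs ++ [a.1]).Chain' (fun u v => (u, v) ∈ redArcs A s t) :=
            hchainred.prefix ⟨a.2 :: ys, by simp⟩
          exact chain'_reflTransGen_last hcpre (mem_of_mem_pathEdges hb1).2 (by simp)
        obtain ⟨c, hc, hgc, hfc⟩ :=
          build_corridor hA hst hb hared (Ne.symm hab) hEq.symm hFa hRba
        exact ⟨c, hc, hfc, hgc⟩
      · rw [pathEdges_cons_cons] at hb2
        rcases List.mem_cons.1 hb2 with hbf | hbok
        · exact absurd (show a = b by rw [hbf]) hab
        · have hRab : Relation.ReflTransGen (fun u v => (u, v) ∈ redArcs A s t) a.2 b.1 := by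
            have hcsuf : (a.2 :: ys).Chain' (fun u v => (u, v) ∈ redArcs A s t) :=
              hchainred.suffix ⟨xs ++ [a.1], by simp⟩
            exact chain'_reflTransGen_head hcsuf rfl (mem_of_mem_pathEdges hbok).1
          obtain ⟨c, hc, hfc, hgc⟩ :=
            build_corridor hA hst hared hb hab hEq hFb hRab
          exact ⟨c, hc, hfc, hgc⟩
  · rintro ⟨c, hc, hac, hbc⟩
    exact corridor_faces_eq hA hst hc hac hbc
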